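/- arXiv:2503.06596 — 3 statements merged into one kernel-verified Lean document; each statement's English description precedes it below -/
import Mathlib

section
/- Let N ≥ 1 be a natural number and let Y_1, …, Y_N be independent real-valued random variables on a probability space, each distributed according to the exponential distribution with rate 1 (the distribution of the squared modulus of a standard circularly-symmetric complex Gaussian). Define M = max(√Y_1, …, √Y_N). Then E[M] = N · Σ_{n=0}^{N−1} C(N−1, n) · (−1)^n · (n+1)^{−3/2} · (√π)/2. -/
open MeasureTheory ProbabilityTheory Real

section Aux

open Set

lemma expMeasure_Iic_eq {x : ℝ} (hx : 0 ≤ x) :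
    expMeasure 1 (Iic x) = ENNReal.ofReal (1 - Real.exp (-x)) := by
  have h : expMeasure 1 (Iic x) = ∫⁻ y in Iic x, exponentialPDF 1 y := by
    rw [expMeasure, gammaMeasure, withDensity_apply _ measurableSet_Iic]
    rfl
  rw [h, lintegral_exponentialPDF_eq_antiDeriv one_pos, if_pos hx, one_mul]

lemma gauss_intble (n : ℕ) :
    IntegrableOn (fun t => Real.exp (-((n:ℝ)+1) * t ^ 2)) (Ioi (0:ℝ)) :=
  (integrable_exp_neg_mul_sq (by positivity)).integrableOn

lemma g_expand (N : ℕ) (t : ℝ) :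
    1 - (1 - Real.exp (-t ^ 2)) ^ N =
      ∑ n ∈ Finset.range N, (N.choose (n+1) : ℝ) * (-1) ^ n * Real.exp (-((n:ℝ)+1) * t ^ 2) := by
  have he : ∀ n : ℕ, Real.exp (-((n:ℝ)+1) * t ^ 2) = Real.exp (-t^2) ^ (n+1) := by
    intro n
    rw [← Real.exp_nat_mul]
    push_cast
    ring_nf
  have hb : (1 - Real.exp (-t ^ 2)) ^ N
      = ∑ k ∈ Finset.range (N+1), (-Real.exp (-t^2)) ^ k * (N.choose k : ℝ) := by
    rw [sub_eq_neg_add, add_pow]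
    simp
  rw [hb, Finset.sum_range_succ']
  simp only [pow_zero, Nat.choose_zero_right, Nat.cast_one, one_mul]
  rw [show ∀ a : ℝ, 1 - (a + 1) = -a by intro a; ring]
  rw [← Finset.sum_neg_distrib]
  refine Finset.sum_congr rfl fun n _ => ?_
  rw [he n, neg_pow]
  ring

lemma final_alg (N : ℕ) (hN : 1 ≤ N) :
    ∑ n ∈ Finset.range N, (N.choose (n+1) : ℝ) * (-1) ^ n * (Real.sqrt (π / ((n:ℝ)+1)) / 2) =
      N * ∑ n ∈ Finset.range N, ((N - 1).choose n : ℝ) * (-1) ^ n *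
        ((n : ℝ) + 1) ^ (-(3 / 2 : ℝ)) * (Real.sqrt π / 2) := by
  rw [Finset.mul_sum]
  refine Finset.sum_congr rfl fun n _ => ?_
  have hpos : (0:ℝ) < (n:ℝ) + 1 := by positivity
  have hch : (N:ℝ) * ((N - 1).choose n : ℝ) = (N.choose (n+1) : ℝ) * ((n:ℝ)+1) := by
    have := Nat.add_one_mul_choose_eq (N-1) n
    rw [Nat.sub_add_cancel hN] at this
    exact_mod_cast congrArg (Nat.cast : ℕ → ℝ) this
  have hsq : Real.sqrt (π / ((n:ℝ)+1)) = Real.sqrt π * ((n:ℝ)+1) ^ (-(1/2 : ℝ)) := by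
    rw [Real.sqrt_eq_rpow, Real.sqrt_eq_rpow, Real.div_rpow Real.pi_pos.le hpos.le,
      div_eq_mul_inv, ← Real.rpow_neg hpos.le]
  have h32 : ((n:ℝ)+1) ^ (-(3/2 : ℝ)) = (((n:ℝ)+1))⁻¹ * ((n:ℝ)+1) ^ (-(1/2:ℝ)) := by
    rw [← Real.rpow_neg_one ((n:ℝ)+1), ← Real.rpow_add hpos]
    norm_num
  rw [hsq, h32]
  have hinv : ((n:ℝ)+1) * ((n:ℝ)+1)⁻¹ = 1 := mul_inv_cancel₀ hpos.ne'
  linear_combination (-((-1:ℝ)^n * Real.sqrt π * ((n:ℝ)+1) ^ (-(1/2:ℝ)) * ((n:ℝ)+1)⁻¹ / 2)) * hch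
    - ((N.choose (n+1) : ℝ) * (-1)^n * Real.sqrt π * ((n:ℝ)+1) ^ (-(1/2:ℝ)) / 2) * hinv

end Aux

/-- Part 1 of Lemma 1: expected maximum modulus of `N` i.i.d. standard circularly
symmetric complex Gaussians, modeled via `N` i.i.d. rate-1 exponential variables
`Y i` (the squared moduli) and `M = max_i √(Y i)`. -/
theorem expected_max_modulus {Ω : Type*} [MeasurableSpace Ω] (μ : Measure Ω)
    [IsProbabilityMeasure μ] (N : ℕ) (hN : 1 ≤ N) (Y : Fin N → Ω → ℝ)
    (hmeas : ∀ i, Measurable (Y i))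
    (hindep : iIndepFun Y μ)
    (hdist : ∀ i, Measure.map (Y i) μ = expMeasure 1) :
    ∫ ω, (⨆ i, Real.sqrt (Y i ω)) ∂μ =
      N * ∑ n ∈ Finset.range N, ((N - 1).choose n : ℝ) * (-1) ^ n *
        ((n : ℝ) + 1) ^ (-(3 / 2 : ℝ)) * (Real.sqrt π / 2) := by
  have hne : Nonempty (Fin N) := ⟨⟨0, hN⟩⟩
  have hsup : ∀ ω, (⨆ i, Real.sqrt (Y i ω)) =
      Finset.univ.sup' Finset.univ_nonempty (fun i => Real.sqrt (Y i ω)) :=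
    fun ω => (Finset.sup'_univ_eq_ciSup _).symm
  have hMm : Measurable (fun ω => ⨆ i, Real.sqrt (Y i ω)) := by
    have h1 : Measurable (Finset.univ.sup' (Finset.univ_nonempty (α := Fin N))
        (fun i ω => Real.sqrt (Y i ω))) :=
      Finset.measurable_sup' _ (fun i _ => (hmeas i).sqrt)
    have h2 : (fun ω => ⨆ i, Real.sqrt (Y i ω)) =
        Finset.univ.sup' Finset.univ_nonempty (fun i ω => Real.sqrt (Y i ω)) := by
      funext ω
      rw [hsup ω, Finset.sup'_apply]
    exact h2 ▸ h1
  have hMnn : ∀ ω, 0 ≤ ⨆ i, Real.sqrt (Y i ω) := by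
    intro ω
    rw [hsup ω]
    exact Finset.le_sup'_of_le _ (Finset.mem_univ ⟨0, hN⟩) (Real.sqrt_nonneg _)
  set g : ℝ → ℝ := fun t => 1 - (1 - Real.exp (-t^2))^N with hg
  have hgnn : ∀ t : ℝ, 0 ≤ g t := by
    intro t
    have h0 : Real.exp (-t^2) ≤ 1 := Real.exp_le_one_iff.2 (neg_nonpos.2 (sq_nonneg t))
    have he := Real.exp_pos (-t^2)
    simp only [hg, sub_nonneg]
    exact pow_le_one₀ (by linarith) (by linarith)
  -- tail probability
  have tail : ∀ t : ℝ, 0 < t →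
      μ {ω | t < ⨆ i, Real.sqrt (Y i ω)} = ENNReal.ofReal (g t) := by
    intro t ht
    have hset : {ω | t < ⨆ i, Real.sqrt (Y i ω)}
        = (⋂ i ∈ Finset.univ, Y i ⁻¹' Set.Iic (t^2))ᶜ := by
      ext ω
      simp only [Set.mem_setOf_eq, Set.mem_compl_iff, Set.mem_iInter, Set.mem_preimage,
        Set.mem_Iic, Finset.mem_univ, forall_const, not_forall, not_le]
      rw [hsup ω, Finset.lt_sup'_iff]
      constructor
      · rintro ⟨i, -, hi⟩
        exact ⟨i, (Real.lt_sqrt ht.le).1 hi⟩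
      · rintro ⟨i, hi⟩
        exact ⟨i, Finset.mem_univ i, (Real.lt_sqrt ht.le).2 hi⟩
    have hmeasInt : MeasurableSet (⋂ i ∈ Finset.univ, Y i ⁻¹' Set.Iic (t^2)) :=
      Finset.measurableSet_biInter _ fun i _ => (hmeas i) measurableSet_Iic
    have hprod : μ (⋂ i ∈ Finset.univ, Y i ⁻¹' Set.Iic (t^2))
        = ∏ i : Fin N, μ (Y i ⁻¹' Set.Iic (t^2)) :=
      hindep.measure_inter_preimage_eq_mul Finset.univ (fun i _ => measurableSet_Iic)
    have hone : ∀ i, μ (Y i ⁻¹' Set.Iic (t^2)) = ENNReal.ofReal (1 - Real.exp (-t^2)) := by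
      intro i
      rw [← Measure.map_apply (hmeas i) measurableSet_Iic, hdist i, expMeasure_Iic_eq (sq_nonneg t)]
    have h0 : Real.exp (-t^2) ≤ 1 := Real.exp_le_one_iff.2 (neg_nonpos.2 (sq_nonneg t))
    rw [hset, measure_compl hmeasInt (measure_ne_top μ _), hprod]
    simp only [hone]
    rw [Finset.prod_const, Finset.card_univ, Fintype.card_fin,
      ← ENNReal.ofReal_pow (by linarith), measure_univ, hg]
    rw [show (1 : ENNReal) = ENNReal.ofReal 1 from ENNReal.ofReal_one.symm,
      ← ENNReal.ofReal_sub _ (pow_nonneg (by linarith) N)]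
  -- integrability of g on Ioi 0
  have hsum_int : IntegrableOn (fun t => ∑ n ∈ Finset.range N,
      (N.choose (n+1) : ℝ) * (-1) ^ n * Real.exp (-((n:ℝ)+1) * t ^ 2)) (Set.Ioi 0) :=
    integrable_finset_sum _ fun n _ => (gauss_intble n).const_mul _
  have hg_int : IntegrableOn g (Set.Ioi 0) :=
    hsum_int.congr_fun (fun t _ => (g_expand N t).symm) measurableSet_Ioi
  calc ∫ ω, (⨆ i, Real.sqrt (Y i ω)) ∂μ
      = (∫⁻ ω, ENNReal.ofReal (⨆ i, Real.sqrt (Y i ω)) ∂μ).toReal :=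
        integral_eq_lintegral_of_nonneg_ae (ae_of_all _ hMnn) hMm.aestronglyMeasurable
    _ = (∫⁻ t in Set.Ioi 0, μ {ω | t < ⨆ i, Real.sqrt (Y i ω)}).toReal := by
        rw [lintegral_eq_lintegral_meas_lt μ (ae_of_all _ hMnn) hMm.aemeasurable]
    _ = (∫⁻ t in Set.Ioi 0, ENNReal.ofReal (g t)).toReal := by
        congr 1
        exact setLIntegral_congr_fun measurableSet_Ioi (fun t ht => tail t ht)
    _ = ∫ t in Set.Ioi 0, g t := by
        rw [← ofReal_integral_eq_lintegral_ofReal hg_int (ae_of_all _ fun t => hgnn t),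
          ENNReal.toReal_ofReal (setIntegral_nonneg measurableSet_Ioi fun t _ => hgnn t)]
    _ = ∑ n ∈ Finset.range N, (N.choose (n+1) : ℝ) * (-1) ^ n *
          (Real.sqrt (π / ((n:ℝ)+1)) / 2) := by
        rw [setIntegral_congr_fun measurableSet_Ioi (fun t _ => g_expand N t),
          integral_finset_sum _ fun n _ => (gauss_intble n).const_mul _]
        refine Finset.sum_congr rfl fun n _ => ?_
        rw [integral_const_mul, integral_gaussian_Ioi]
    _ = _ := final_alg N hN
end

section
/- For every natural number N ≥ 1, the improper Riemann/Lebesgue integral ∫_0^∞ (1 − (1 − e^{−t})^N) dt equals N · Σ_{n=0}^{N−1} C(N−1, n) · (−1)^n / (n+1)². -/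
open MeasureTheory Real

lemma integral_exp_neg_mul_Ioi_zero {b : ℝ} (hb : 0 < b) :
    ∫ t in Set.Ioi (0 : ℝ), Real.exp (-b * t) = 1 / b := by
  have h := integral_comp_mul_left_Ioi (fun x => Real.exp (-x)) 0 hb
  simp only [mul_zero, integral_exp_neg_Ioi, neg_zero, Real.exp_zero, smul_eq_mul,
    mul_one] at h
  simp_rw [neg_mul]
  rw [h, one_div]

/-- Layer-cake integral identity underlying part 2 of Lemma 1. -/
theorem layer_cake_max_exponential (N : ℕ) (hN : 1 ≤ N) :
    ∫ t in Set.Ioi (0 : ℝ), (1 - (1 - Real.exp (-t)) ^ N) =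
      N * ∑ n ∈ Finset.range N, ((N - 1).choose n : ℝ) * (-1) ^ n / ((n : ℝ) + 1) ^ 2 := by
  have hfun : ∀ t : ℝ, 1 - (1 - Real.exp (-t)) ^ N =
      ∑ n ∈ Finset.range N, (-1 : ℝ) ^ n * (N.choose (n + 1)) *
        Real.exp (-((n : ℝ) + 1) * t) := by
    intro t
    set x := Real.exp (-t) with hx
    have hNs : N - 1 + 1 = N := Nat.succ_pred_eq_of_pos hN
    have hbin : (1 - x) ^ N = ∑ k ∈ Finset.range (N + 1), (-x) ^ k * (N.choose k) := by
      have := add_pow (-x) 1 N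
      simpa [one_pow, sub_eq_neg_add] using this
    rw [hbin, Finset.sum_range_succ']
    have hterm : ∀ n, (-x) ^ (n + 1) * (N.choose (n + 1) : ℝ) =
        -((-1 : ℝ) ^ n * (N.choose (n + 1)) * Real.exp (-((n : ℝ) + 1) * t)) := by
      intro n
      have hxp : x ^ (n + 1) = Real.exp (-((n : ℝ) + 1) * t) := by
        rw [hx, ← Real.exp_nat_mul]
        congr 1
        push_cast
        ring
      rw [neg_pow, pow_succ (-1 : ℝ), ← hxp]
      ring
    simp only [hterm]
    simp [Finset.sum_neg_distrib]
  rw [MeasureTheory.integral_congr_ae (Filter.Eventually.of_forall fun t => hfun t)]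
  have hint : ∀ n ∈ Finset.range N, IntegrableOn
      (fun t : ℝ => (-1 : ℝ) ^ n * (N.choose (n + 1)) * Real.exp (-((n : ℝ) + 1) * t))
      (Set.Ioi 0) := by
    intro n _
    exact (exp_neg_integrableOn_Ioi 0 (by positivity)).const_mul _
  rw [MeasureTheory.integral_finset_sum _ hint]
  have hval : ∀ n ∈ Finset.range N,
      (∫ t in Set.Ioi (0 : ℝ), (-1 : ℝ) ^ n * (N.choose (n + 1)) *
        Real.exp (-((n : ℝ) + 1) * t))
      = (N : ℝ) * (((N - 1).choose n : ℝ) * (-1) ^ n / ((n : ℝ) + 1) ^ 2) := by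
    intro n _
    rw [MeasureTheory.integral_const_mul, integral_exp_neg_mul_Ioi_zero (by positivity)]
    have hkey : (N : ℝ) * ((N - 1).choose n : ℝ) = (N.choose (n + 1) : ℝ) * ((n : ℝ) + 1) := by
      have := Nat.add_one_mul_choose_eq (N - 1) n
      simp only [Nat.succ_eq_add_one, Nat.sub_add_cancel hN] at this
      exact_mod_cast this
    have hn1 : ((n : ℝ) + 1) ≠ 0 := by positivity
    field_simp
    linear_combination (-1:ℝ) * hkey
  rw [Finset.sum_congr rfl hval, ← Finset.mul_sum]
end

section
/- Define f(L) = L·Σ_{n=0}^{L−1} C(L−1, n)·(−1)^n·(n+1)^{−3/2}·(√π)/2 and g(L) = L·Σ_{n=0}^{L−1} C(L−1, n)·(−1)^n/(n+1)² for natural numbers L ≥ 1, and Ψ(L) = f(L)²/g(L). Let K ≥ 1, and for each k ∈ {1, …, K} let P, σ², N₁, N₂, β₁_k, β₂_k be positive reals, let L_{k1}, L_{k2} ≥ 1 be natural numbers, and assume g(L_{k1}) > 0. Then (1/K)·Σ_{k=1}^K (L_{k2}/N₂)·log₂( 1 + (π/2)·( (N₁N₂/√(L_{k1}·L_{k2}))·f(L_{k1})²·√(β₁_k·β₂_k)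 ) / ( σ²/P + (N₁²/L_{k1})·g(L_{k1})²·β₁_k + (N₂²/L_{k2})·β₂_k ) ) ≤ (1/K)·Σ_{k=1}^K (L_{k2}/N₂)·log₂( 1 + Ψ(L_{k1})·(π/4) ). -/
open Real

/-- The constant `f(L)` from Lemma 1 (expected maximum modulus). -/
noncomputable def fConst (L : ℕ) : ℝ :=
  L * ∑ n ∈ Finset.range L, ((L - 1).choose n : ℝ) * (-1) ^ n *
    ((n : ℝ) + 1) ^ (-(3 / 2 : ℝ)) * (Real.sqrt π / 2)

/-- The constant `g(L)` from Lemma 1 (expected maximum squared modulus). -/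
noncomputable def gConst (L : ℕ) : ℝ :=
  L * ∑ n ∈ Finset.range L, ((L - 1).choose n : ℝ) * (-1) ^ n / ((n : ℝ) + 1) ^ 2

/-- `Ψ(L) = f(L)² / g(L)`. -/
noncomputable def psiConst (L : ℕ) : ℝ := (fConst L) ^ 2 / gConst L

/-- Theorem 2, part 2 (equation (29)): the maximum gain in the ergodic sum-SE of
MO-X obtained by cooperation over no cooperation is bounded by
`(1/K)·Σ_k (L_{k2}/N₂)·log₂(1 + Ψ(L_{k1})·π/4)`. -/
theorem cooperation_gain_bound
    (K : ℕ) (hK : 1 ≤ K) (P σ2 N1 N2 : ℝ)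
    (hP : 0 < P) (hσ : 0 < σ2) (hN1 : 0 < N1) (hN2 : 0 < N2)
    (β1 β2 : Fin K → ℝ) (hβ1 : ∀ k, 0 < β1 k) (hβ2 : ∀ k, 0 < β2 k)
    (L1 L2 : Fin K → ℕ) (hL1 : ∀ k, 1 ≤ L1 k) (hL2 : ∀ k, 1 ≤ L2 k)
    (hg : ∀ k, 0 < gConst (L1 k)) :
    (1 / (K : ℝ)) * ∑ k, ((L2 k : ℝ) / N2) * Real.logb 2 (1 + (π / 2) *
        ((N1 * N2 / Real.sqrt ((L1 k : ℝ) * (L2 k : ℝ))) * (fConst (L1 k)) ^ 2 *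
            Real.sqrt (β1 k * β2 k) /
          (σ2 / P + ((N1 ^ 2 / (L1 k : ℝ)) * (gConst (L1 k)) ^ 2 * β1 k +
            (N2 ^ 2 / (L2 k : ℝ)) * β2 k)))) ≤
      (1 / (K : ℝ)) * ∑ k, ((L2 k : ℝ) / N2) * Real.logb 2 (1 + psiConst (L1 k) * (π / 4)) := by
  have hπ : (0:ℝ) < π := Real.pi_pos
  apply mul_le_mul_of_nonneg_left _ (by positivity)
  apply Finset.sum_le_sum
  intro k _
  have hL1pos : (0:ℝ) < (L1 k : ℝ) := by exact_mod_cast (hL1 k)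
  have hL2pos : (0:ℝ) < (L2 k : ℝ) := by exact_mod_cast (hL2 k)
  have hgk := hg k
  have hβ1k := hβ1 k
  have hβ2k := hβ2 k
  set g := gConst (L1 k) with hgdef
  set f := fConst (L1 k) with hfdef
  set a := N1 / Real.sqrt (L1 k : ℝ) * g * Real.sqrt (β1 k) with hadef
  set b := N2 / Real.sqrt (L2 k : ℝ) * Real.sqrt (β2 k) with hbdef
  have ha2 : a ^ 2 = N1 ^ 2 / (L1 k : ℝ) * g ^ 2 * β1 k := by
    rw [hadef, mul_pow, mul_pow, div_pow, Real.sq_sqrt hL1pos.le,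
      Real.sq_sqrt (hβ1 k).le]
  have hb2 : b ^ 2 = N2 ^ 2 / (L2 k : ℝ) * β2 k := by
    rw [hbdef, mul_pow, div_pow, Real.sq_sqrt hL2pos.le, Real.sq_sqrt (hβ2 k).le]
  have hab : a * b = N1 * N2 / Real.sqrt ((L1 k : ℝ) * (L2 k : ℝ)) * g *
      Real.sqrt (β1 k * β2 k) := by
    rw [hadef, hbdef, Real.sqrt_mul hL1pos.le, Real.sqrt_mul (hβ1 k).le]
    field_simp
  have hden : 0 < σ2 / P + (N1 ^ 2 / (L1 k : ℝ) * g ^ 2 * β1 k +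
      N2 ^ 2 / (L2 k : ℝ) * β2 k) := by positivity
  have hpsi : 0 ≤ psiConst (L1 k) := by
    unfold psiConst
    rw [← hfdef, ← hgdef]
    exact div_nonneg (sq_nonneg _) hgk.le
  have hf2 : f ^ 2 = psiConst (L1 k) * g := by
    unfold psiConst
    rw [← hfdef, ← hgdef]
    field_simp
  have hnum : N1 * N2 / Real.sqrt ((L1 k : ℝ) * (L2 k : ℝ)) * f ^ 2 *
      Real.sqrt (β1 k * β2 k) = psiConst (L1 k) * (a * b) := by
    rw [hf2, hab]; ring
  have hamgm : a * b ≤ (a ^ 2 + b ^ 2) / 2 := by nlinarith [two_mul_le_add_sq a b]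
  have hcore : (π / 2) * (N1 * N2 / Real.sqrt ((L1 k : ℝ) * (L2 k : ℝ)) * f ^ 2 *
        Real.sqrt (β1 k * β2 k) /
      (σ2 / P + (N1 ^ 2 / (L1 k : ℝ) * g ^ 2 * β1 k + N2 ^ 2 / (L2 k : ℝ) * β2 k)))
      ≤ psiConst (L1 k) * (π / 4) := by
    rw [hnum]
    have hσP : 0 ≤ σ2 / P := by positivity
    have hF : psiConst (L1 k) * (a * b) /
        (σ2 / P + (N1 ^ 2 / (L1 k : ℝ) * g ^ 2 * β1 k + N2 ^ 2 / (L2 k : ℝ) * β2 k))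
        ≤ psiConst (L1 k) / 2 := by
      rw [div_le_iff₀ hden]
      have h1 : psiConst (L1 k) * (a * b) ≤ psiConst (L1 k) * ((a ^ 2 + b ^ 2) / 2) :=
        mul_le_mul_of_nonneg_left hamgm hpsi
      rw [← ha2, ← hb2]
      nlinarith [mul_nonneg hpsi hσP]
    calc π / 2 * (psiConst (L1 k) * (a * b) /
          (σ2 / P + (N1 ^ 2 / (L1 k : ℝ) * g ^ 2 * β1 k + N2 ^ 2 / (L2 k : ℝ) * β2 k)))
        ≤ π / 2 * (psiConst (L1 k) / 2) :=
          mul_le_mul_of_nonneg_left hF (by positivity)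
      _ = psiConst (L1 k) * (π / 4) := by ring
  have harg : 0 ≤ (π / 2) * (N1 * N2 / Real.sqrt ((L1 k : ℝ) * (L2 k : ℝ)) * f ^ 2 *
        Real.sqrt (β1 k * β2 k) /
      (σ2 / P + (N1 ^ 2 / (L1 k : ℝ) * g ^ 2 * β1 k + N2 ^ 2 / (L2 k : ℝ) * β2 k))) := by
    positivity
  apply mul_le_mul_of_nonneg_left _ (by positivity)
  exact Real.logb_le_logb_of_le one_lt_two (by linarith) (by linarith)
end
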